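/- arXiv:1806.03458 — 3 statements merged into one kernel-verified Lean document; each statement's English description precedes it below -/
import Mathlib

section
/- The real hypersurface S ⊂ ℂ³ given by Im(w) = 2 Re(z₁ w² z̄₂) is invariant under the flows of the holomorphic vector fields Re(3z₁∂_{z₁} - z₂∂_{z₂} - 2w∂_w) and Re(i z₁ w² ∂_{z₂}). -/
open Complex

/-- The real hypersurface `Im w = 2 Re(z₁ w² z̄₂)` in `ℂ³` is invariant under the flows of
the real vector fields `Re(3z₁∂_{z₁} - z₂∂_{z₂} - 2w∂_w)` (whose flow is
`(z₁,z₂,w) ↦ (e^{3t}z₁, e^{-t}z₂, e^{-2t}w)`) and `Re(i z₁ w² ∂_{z₂})` (whose flow is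
`(z₁,z₂,w) ↦ (z₁, z₂ + t·i z₁ w², w)`). -/
theorem stmt11 (z₁ z₂ w : ℂ)
    (h : w.im = 2 * (z₁ * w^2 * (starRingEnd ℂ) z₂).re) (t : ℝ) :
    ((Complex.exp (-2*(t:ℂ)) * w).im =
      2 * ((Complex.exp (3*(t:ℂ)) * z₁) * (Complex.exp (-2*(t:ℂ)) * w)^2 *
        (starRingEnd ℂ) (Complex.exp (-(t:ℂ)) * z₂)).re) ∧
    (w.im = 2 * (z₁ * w^2 * (starRingEnd ℂ) (z₂ + (t:ℂ) * Complex.I * z₁ * w^2)).re) := by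
  constructor
  · have h1 : (-2*(t:ℂ)) = ((-(2*t):ℝ):ℂ) := by push_cast; ring
    have h2 : (3*(t:ℂ)) = ((3*t:ℝ):ℂ) := by push_cast; ring
    have h3 : (-(t:ℂ)) = ((-t:ℝ):ℂ) := by push_cast; ring
    rw [h1, h2, h3, ← Complex.ofReal_exp, ← Complex.ofReal_exp, ← Complex.ofReal_exp,
      map_mul, Complex.conj_ofReal]
    have key : ((Real.exp (3*t) : ℂ)) * ((Real.exp (-(2*t)) : ℂ))^2 * ((Real.exp (-t)) : ℂ)
        = ((Real.exp (-(2*t))) : ℂ) := by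
      norm_cast
      rw [sq, ← Real.exp_add, ← Real.exp_add, ← Real.exp_add, Real.exp_eq_exp]; ring
    have h4 : ((Real.exp (3*t):ℂ) * z₁) * ((Real.exp (-(2*t)):ℂ) * w)^2 *
        ((Real.exp (-t):ℂ) * (starRingEnd ℂ) z₂)
        = (Real.exp (-(2*t)):ℂ) * (z₁ * w^2 * (starRingEnd ℂ) z₂) := by
      calc ((Real.exp (3*t):ℂ) * z₁) * ((Real.exp (-(2*t)):ℂ) * w)^2 *
            ((Real.exp (-t):ℂ) * (starRingEnd ℂ) z₂)
          = ((Real.exp (3*t) : ℂ)) * ((Real.exp (-(2*t)) : ℂ))^2 * ((Real.exp (-t)) : ℂ)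
            * (z₁ * w^2 * (starRingEnd ℂ) z₂) := by ring
        _ = (Real.exp (-(2*t)):ℂ) * (z₁ * w^2 * (starRingEnd ℂ) z₂) := by rw [key]
    rw [h4]
    generalize Real.exp (-(2*t)) = E
    simp only [Complex.mul_im, Complex.mul_re, Complex.ofReal_re, Complex.ofReal_im, h]
    ring
  · rw [map_add, mul_add, Complex.add_re, mul_add]
    have key : (z₁ * w ^ 2 * (starRingEnd ℂ) ((t:ℂ) * Complex.I * z₁ * w ^ 2)).re = 0 := by
      have : z₁ * w ^ 2 * (starRingEnd ℂ) ((t:ℂ) * Complex.I * z₁ * w ^ 2)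
          = -(t:ℂ) * Complex.I * ((z₁ * w^2) * (starRingEnd ℂ) (z₁ * w^2)) := by
        simp only [map_mul, Complex.conj_ofReal, Complex.conj_I, map_pow]; ring
      rw [this, Complex.mul_conj]
      simp only [Complex.mul_re, Complex.mul_im, Complex.ofReal_re, Complex.ofReal_im,
        Complex.I_re, Complex.I_im, Complex.neg_re, Complex.neg_im]
      ring
    rw [key, h]; ring
end

section
/- On the set where Re(w₀^{2m}) ≠ 0 and σ = ε·sgn(Re(w₀^{2m})), the map (z,w) ↦ (z w^m, σ w^{2m}) sends points satisfying Im(w^{2m})√(1-‖z‖⁴) = ε Re(w^{2m})‖z‖² with ‖z‖ < 1 into the hyperquadric {(Z,W) : Im(W) = ‖Z‖²}. -/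
open Complex

lemma key2 (A C t R s : ℝ) (hA : 0 < A) (hR : R^2 = A^2 + C^2) (hR0 : 0 ≤ R)
    (hs : s^2 = 1 - t^2) (hs0 : 0 < s) (hC : C * s = A * t) : C = R * t := by
  have hsq : (C*s)^2 = (A*t)^2 := by rw [hC]
  have h2 : C^2 = R^2 * t^2 := by linear_combination hsq - C^2*hs - t^2*hR
  have h3 : (C - R*t) * (C + R*t) = 0 := by nlinarith
  rcases mul_eq_zero.mp h3 with h4 | h4
  · linarith
  · have hC' : C = -(R*t) := by linarith
    have ht : t * (A + R*s) = 0 := by nlinarith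
    have hpos : 0 < A + R*s := by positivity
    have ht0 : t = 0 := by
      rcases mul_eq_zero.mp ht with h | h
      · exact h
      · linarith
    subst ht0; simpa using hC'

lemma key1 (A B t R s ε : ℝ) (hε : ε = 1 ∨ ε = -1) (hA : A ≠ 0)
    (hR : R^2 = A^2 + B^2) (hR0 : 0 ≤ R) (hs : s^2 = 1 - t^2) (hs0 : 0 < s)
    (h : B * s = ε * A * t) : ε * Real.sign A * B = R * t := by
  have hε2 : ε^2 = 1 := by rcases hε with rfl | rfl <;> norm_num
  rcases lt_or_gt_of_ne hA with hA' | hA'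
  · rw [Real.sign_of_neg hA']
    have hC : (-(ε*B)) * s = (-A) * t := by linear_combination (-ε) * h - A*t*hε2
    have := key2 (-A) (-(ε*B)) t R s (by linarith) (by nlinarith) hR0 hs hs0 hC
    linarith
  · rw [Real.sign_of_pos hA']
    have hC : (ε*B) * s = A * t := by linear_combination ε * h + A*t*hε2
    have := key2 A (ε*B) t R s hA' (by nlinarith) hR0 hs hs0 hC
    linarith

/-- If `Re(w^{2m}) ≠ 0` and `σ = ε·sgn(Re(w^{2m}))`, the map `(z,w) ↦ (z w^m, σ w^{2m})`
sends points satisfying `Im(w^{2m})√(1-‖z‖⁴) = ε Re(w^{2m})‖z‖²` with `|‖z‖²| < 1` into the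
hyperquadric `{(Z,W) : Im W = ‖Z‖²}`, where `‖z‖² = Σⱼ σⱼ|zⱼ|²`. -/
theorem stmt14 (n : ℕ) (m : ℕ) (hm : 1 ≤ m) (ε : ℝ) (hε : ε = 1 ∨ ε = -1)
    (sgn : Fin n → ℝ) (hsgn : ∀ j, sgn j = 1 ∨ sgn j = -1) (z : Fin n → ℂ) (w : ℂ)
    (ht1 : -1 < ∑ j, sgn j * ‖z j‖^2)
    (ht2 : ∑ j, sgn j * ‖z j‖^2 < 1)
    (hre : (w^(2*m)).re ≠ 0)
    (σ : ℝ) (hσ : σ = ε * Real.sign ((w^(2*m)).re))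
    (h : (w^(2*m)).im * Real.sqrt (1 - (∑ j, sgn j * ‖z j‖^2)^2)
      = ε * (w^(2*m)).re * (∑ j, sgn j * ‖z j‖^2)) :
    ((σ:ℂ) * w^(2*m)).im = ∑ j, sgn j * ‖z j * w^m‖^2 := by
  set t := ∑ j, sgn j * ‖z j‖^2 with htdef
  set A := (w^(2*m)).re with hAdef
  set B := (w^(2*m)).im with hBdef
  set R := ‖w^(2*m)‖ with hRdef
  have hRHS : ∑ j, sgn j * ‖z j * w^m‖^2 = R * t := by
    rw [htdef, Finset.mul_sum]
    apply Finset.sum_congr rfl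
    intro j _
    rw [hRdef, norm_mul, norm_pow, norm_pow, mul_pow, ← pow_mul, mul_comm m 2]
    ring
  have hLHS : ((σ:ℂ) * w^(2*m)).im = σ * B := by
    simp [Complex.mul_im, hBdef]
  have ht2' : t^2 < 1 := by nlinarith
  have hs : (Real.sqrt (1-t^2))^2 = 1 - t^2 := Real.sq_sqrt (by nlinarith)
  have hs0 : 0 < Real.sqrt (1-t^2) := Real.sqrt_pos.mpr (by nlinarith)
  have hR : R^2 = A^2 + B^2 := by
    rw [hRdef, Complex.sq_norm, Complex.normSq_apply]; ring
  rw [hLHS, hRHS, hσ]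
  exact key1 A B t R _ ε hε hre hR (norm_nonneg _) hs hs0 h
end

section
/- The six real vector fields R = 2Re(-z₂∂_{z₂} + 2w∂_w), S = Re(iz₁∂_{z₁}), J = -2Re(iz₂∂_{z₂}), X = Re(iz₁z₂w∂_{z₁} + ∂_{z₂} + 2iz₂w²∂_w), Y = Re(z₁z₂w∂_{z₁} + i∂_{z₂} + 2z₂w²∂_w), Z = Re(z₁w∂_{z₁} + 2w²∂_w) satisfy [X,Y] = Z, [R,X] = X, [R,Y] = Y, [R,Z] = 2Z, [J,X] = Y, [J,Y] = -X, and S commutes with X, Y, Z, R, J. -/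
open Complex

/-- Lie bracket of (real-analytic) vector fields on `ℂ³ ≅ ℝ⁶`, written as maps
`ℂ×ℂ×ℂ → ℂ×ℂ×ℂ` under the identification of a real tangent vector with its
`(∂_{z₁},∂_{z₂},∂_w)`-components. -/
noncomputable def brkt (f g : ℂ × ℂ × ℂ → ℂ × ℂ × ℂ) : ℂ × ℂ × ℂ → ℂ × ℂ × ℂ :=
  fun p => fderiv ℝ g p (f p) - fderiv ℝ f p (g p)

/-- `R = 2Re(-z₂∂_{z₂} + 2w∂_w)`. -/
noncomputable def fR : ℂ × ℂ × ℂ → ℂ × ℂ × ℂ := fun p => (0, -p.2.1, 2 * p.2.2)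
/-- `S = Re(iz₁∂_{z₁})`. -/
noncomputable def fS : ℂ × ℂ × ℂ → ℂ × ℂ × ℂ := fun p => (Complex.I * p.1 / 2, 0, 0)
/-- `J = -2Re(iz₂∂_{z₂})`. -/
noncomputable def fJ : ℂ × ℂ × ℂ → ℂ × ℂ × ℂ := fun p => (0, -Complex.I * p.2.1, 0)
/-- `X = Re(iz₁z₂w∂_{z₁} + ∂_{z₂} + 2iz₂w²∂_w)`. -/
noncomputable def fX : ℂ × ℂ × ℂ → ℂ × ℂ × ℂ :=
  fun p => (Complex.I * p.1 * p.2.1 * p.2.2 / 2, 1 / 2, Complex.I * p.2.1 * p.2.2^2)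
/-- `Y = Re(z₁z₂w∂_{z₁} + i∂_{z₂} + 2z₂w²∂_w)`. -/
noncomputable def fY : ℂ × ℂ × ℂ → ℂ × ℂ × ℂ :=
  fun p => (p.1 * p.2.1 * p.2.2 / 2, Complex.I / 2, p.2.1 * p.2.2^2)
/-- `Z = Re(z₁w∂_{z₁} + 2w²∂_w)`. -/
noncomputable def fZ : ℂ × ℂ × ℂ → ℂ × ℂ × ℂ := fun p => (p.1 * p.2.2 / 2, 0, p.2.2^2)

section aux
open ContinuousLinearMap

noncomputable def P1 : ℂ × ℂ × ℂ →L[ℝ] ℂ := fst ℝ ℂ (ℂ × ℂ)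
noncomputable def P2 : ℂ × ℂ × ℂ →L[ℝ] ℂ := (fst ℝ ℂ ℂ).comp (snd ℝ ℂ (ℂ × ℂ))
noncomputable def P3 : ℂ × ℂ × ℂ →L[ℝ] ℂ := (snd ℝ ℂ ℂ).comp (snd ℝ ℂ (ℂ × ℂ))

lemma h1 (p : ℂ × ℂ × ℂ) : HasFDerivAt (fun q : ℂ × ℂ × ℂ => q.1) P1 p := hasFDerivAt_fst
lemma h2 (p : ℂ × ℂ × ℂ) : HasFDerivAt (fun q : ℂ × ℂ × ℂ => q.2.1) P2 p := hasFDerivAt_snd.fst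
lemma h3 (p : ℂ × ℂ × ℂ) : HasFDerivAt (fun q : ℂ × ℂ × ℂ => q.2.2) P3 p := hasFDerivAt_snd.snd

lemma hsq (p : ℂ × ℂ × ℂ) : HasFDerivAt (fun q : ℂ × ℂ × ℂ => q.2.2 ^ 2)
    (p.2.2 • P3 + p.2.2 • P3) p := by
  rw [show (fun q : ℂ × ℂ × ℂ => q.2.2 ^ 2) = fun q => q.2.2 * q.2.2 from funext fun q => pow_two _]
  exact (h3 p).mul (h3 p)

noncomputable def DR : ℂ × ℂ × ℂ →L[ℝ] ℂ × ℂ × ℂ :=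
  (0 : ℂ × ℂ × ℂ →L[ℝ] ℂ).prod ((-P2).prod ((2 : ℂ) • P3))
noncomputable def DS : ℂ × ℂ × ℂ →L[ℝ] ℂ × ℂ × ℂ :=
  ((2 : ℂ)⁻¹ • Complex.I • P1).prod ((0 : ℂ × ℂ × ℂ →L[ℝ] ℂ).prod 0)
noncomputable def DJ : ℂ × ℂ × ℂ →L[ℝ] ℂ × ℂ × ℂ :=
  (0 : ℂ × ℂ × ℂ →L[ℝ] ℂ).prod (((-Complex.I : ℂ) • P2).prod 0)
noncomputable def DX (p : ℂ × ℂ × ℂ) : ℂ × ℂ × ℂ →L[ℝ] ℂ × ℂ × ℂ :=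
  ((2 : ℂ)⁻¹ • ((Complex.I * p.1 * p.2.1) • P3 +
      p.2.2 • ((Complex.I * p.1) • P2 + p.2.1 • (Complex.I • P1)))).prod
    ((0 : ℂ × ℂ × ℂ →L[ℝ] ℂ).prod
      ((Complex.I * p.2.1) • (p.2.2 • P3 + p.2.2 • P3) + (p.2.2 ^ 2) • (Complex.I • P2)))
noncomputable def DY (p : ℂ × ℂ × ℂ) : ℂ × ℂ × ℂ →L[ℝ] ℂ × ℂ × ℂ :=
  ((2 : ℂ)⁻¹ • ((p.1 * p.2.1) • P3 + p.2.2 • (p.1 • P2 + p.2.1 • P1))).prod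
    ((0 : ℂ × ℂ × ℂ →L[ℝ] ℂ).prod
      (p.2.1 • (p.2.2 • P3 + p.2.2 • P3) + (p.2.2 ^ 2) • P2))
noncomputable def DZ (p : ℂ × ℂ × ℂ) : ℂ × ℂ × ℂ →L[ℝ] ℂ × ℂ × ℂ :=
  ((2 : ℂ)⁻¹ • (p.1 • P3 + p.2.2 • P1)).prod
    ((0 : ℂ × ℂ × ℂ →L[ℝ] ℂ).prod (p.2.2 • P3 + p.2.2 • P3))

lemma hR (p : ℂ × ℂ × ℂ) : HasFDerivAt fR DR p :=
  HasFDerivAt.prodMk (hasFDerivAt_const (0 : ℂ) p) (HasFDerivAt.prodMk ((h2 p).neg) ((h3 p).const_mul (2 : ℂ)))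
lemma hS (p : ℂ × ℂ × ℂ) : HasFDerivAt fS DS p :=
  HasFDerivAt.prodMk (((h1 p).const_mul Complex.I).mul_const (2 : ℂ)⁻¹)
    (HasFDerivAt.prodMk (hasFDerivAt_const (0 : ℂ) p) (hasFDerivAt_const (0 : ℂ) p))
lemma hJ (p : ℂ × ℂ × ℂ) : HasFDerivAt fJ DJ p :=
  HasFDerivAt.prodMk (hasFDerivAt_const (0 : ℂ) p)
    (HasFDerivAt.prodMk ((h2 p).const_mul (-Complex.I)) (hasFDerivAt_const (0 : ℂ) p))
lemma hX (p : ℂ × ℂ × ℂ) : HasFDerivAt fX (DX p) p :=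
  HasFDerivAt.prodMk ((((((h1 p).const_mul Complex.I).mul (h2 p)).mul (h3 p)).mul_const (2 : ℂ)⁻¹))
    (HasFDerivAt.prodMk (hasFDerivAt_const ((1 : ℂ) / 2) p) (((h2 p).const_mul Complex.I).mul (hsq p)))
lemma hY (p : ℂ × ℂ × ℂ) : HasFDerivAt fY (DY p) p :=
  HasFDerivAt.prodMk ((((h1 p).mul (h2 p)).mul (h3 p)).mul_const (2 : ℂ)⁻¹)
    (HasFDerivAt.prodMk (hasFDerivAt_const (Complex.I / 2) p) ((h2 p).mul (hsq p)))
lemma hZ (p : ℂ × ℂ × ℂ) : HasFDerivAt fZ (DZ p) p :=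
  HasFDerivAt.prodMk (((h1 p).mul (h3 p)).mul_const (2 : ℂ)⁻¹)
    (HasFDerivAt.prodMk (hasFDerivAt_const (0 : ℂ) p) (hsq p))

end aux

/-- The vector fields `R, S, J, X, Y, Z` satisfy `[X,Y] = Z`, `[R,X] = X`, `[R,Y] = Y`,
`[R,Z] = 2Z`, `[J,X] = Y`, `[J,Y] = -X`, and `S` commutes with `X, Y, Z, R, J`. -/
theorem stmt16 :
    brkt fX fY = fZ ∧ brkt fR fX = fX ∧ brkt fR fY = fY ∧
    brkt fR fZ = (fun p => (2:ℂ) • fZ p) ∧ brkt fJ fX = fY ∧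
    brkt fJ fY = (fun p => -fX p) ∧
    brkt fS fX = (fun _ => 0) ∧ brkt fS fY = (fun _ => 0) ∧
    brkt fS fZ = (fun _ => 0) ∧ brkt fS fR = (fun _ => 0) ∧
    brkt fS fJ = (fun _ => 0) := by
  refine ⟨?_, ?_, ?_, ?_, ?_, ?_, ?_, ?_, ?_, ?_, ?_⟩ <;>
  · funext p
    simp only [brkt, (hR p).fderiv, (hS p).fderiv, (hJ p).fderiv, (hX p).fderiv,
      (hY p).fderiv, (hZ p).fderiv]
    simp only [DR, DS, DJ, DX, DY, DZ, P1, P2, P3, fR, fS, fJ, fX, fY, fZ,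
      ContinuousLinearMap.prod_apply, ContinuousLinearMap.add_apply,
      ContinuousLinearMap.smul_apply, ContinuousLinearMap.coe_comp',
      Function.comp_apply, ContinuousLinearMap.coe_fst', ContinuousLinearMap.coe_snd',
      ContinuousLinearMap.zero_apply, ContinuousLinearMap.neg_apply, smul_eq_mul,
      Prod.mk_sub_mk, Prod.mk.injEq, Prod.neg_mk, Prod.smul_mk]
    norm_num
    repeat' constructor
    all_goals (ring_nf; try simp only [Complex.I_sq]; try norm_num; try ring_nf)
end
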